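/- Let k be a field and Π = Π_k(k[s,t]/(s^2,t^2)) as presented by generators a,s,t,e,f and the relations above. The elements u = sef + efs + fse and v = tef + eft + fte satisfy: u is normalizing for the automorphism σ of Π fixing a,s,e,f and sending t ↦ −t (i.e. ux = σ(x)u for all x), and consequently A := u^2 and B := v^2 are central elements of Π of degree 4. -/

import Mathlib

set_option synthInstance.maxHeartbeats 1000000
set_option maxHeartbeats 1000000

noncomputable section

/-- Generators `a, s, t, e, f` of the generalized preprojective algebra
`Π_k(k[s,t]/(s²,t²))`. -/
inductive Gen5 : Type
  | a | s | t | e | f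
deriving DecidableEq

variable (k : Type) [Field k]

/-- The image of a generator in the free algebra. -/
def g5 (x : Gen5) : FreeAlgebra k Gen5 := FreeAlgebra.ι k x

open Gen5 in
/-- The defining relations of `Π_k(k[s,t]/(s²,t²))`:
`s² = t² = st − ts = 0`, `a² = a`, `as = sa = at = ta = 0`, `ea = e`, `af = f`,
`ae = fa = 0`, `es = et = sf = tf = 0`, `fe = 0`, and
`efst + seft + tefs + stef = 0`. -/
inductive Rel5 : FreeAlgebra k Gen5 → FreeAlgebra k Gen5 → Prop
  | ss : Rel5 (g5 k s * g5 k s) 0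
  | tt : Rel5 (g5 k t * g5 k t) 0
  | st : Rel5 (g5 k s * g5 k t) (g5 k t * g5 k s)
  | aa : Rel5 (g5 k a * g5 k a) (g5 k a)
  | as : Rel5 (g5 k a * g5 k s) 0
  | sa : Rel5 (g5 k s * g5 k a) 0
  | at : Rel5 (g5 k a * g5 k t) 0
  | ta : Rel5 (g5 k t * g5 k a) 0
  | ea : Rel5 (g5 k e * g5 k a) (g5 k e)
  | af : Rel5 (g5 k a * g5 k f) (g5 k f)
  | ae : Rel5 (g5 k a * g5 k e) 0
  | fa : Rel5 (g5 k f * g5 k a) 0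
  | es : Rel5 (g5 k e * g5 k s) 0
  | et : Rel5 (g5 k e * g5 k t) 0
  | sf : Rel5 (g5 k s * g5 k f) 0
  | tf : Rel5 (g5 k t * g5 k f) 0
  | fe : Rel5 (g5 k f * g5 k e) 0
  | pre : Rel5 (g5 k e * g5 k f * g5 k s * g5 k t + g5 k s * g5 k e * g5 k f * g5 k t +
      g5 k t * g5 k e * g5 k f * g5 k s + g5 k s * g5 k t * g5 k e * g5 k f) 0

/-- The generalized preprojective algebra `Π_k(k[s,t]/(s²,t²))`. -/
def Pi5 := RingQuot (Rel5 k)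

instance : Ring (Pi5 k) := by unfold Pi5; infer_instance
instance : Algebra k (Pi5 k) := by unfold Pi5; infer_instance

/-- Degrees: `a, s, t` have degree `0`, `e, f` degree `1`. -/
def deg5 : Gen5 → ℕ
  | .a | .s | .t => 0
  | .e | .f => 1

/-- The degree-`d` component of `Π_k(k[s,t]/(s²,t²))`: the `k`-span of (images of) words
with `d` occurrences of `e, f` in total. -/
def Pi5Comp (d : ℕ) : Submodule k (Pi5 k) :=
  Submodule.span k
    {z | ∃ l : List Gen5, (l.map deg5).sum = d ∧
      z = (l.map fun x => RingQuot.mkAlgHom k (Rel5 k) (g5 k x)).prod}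


/-- The image of a generator in `Π_k(k[s,t]/(s²,t²))`. -/
def G5 (x : Gen5) : Pi5 k := RingQuot.mkAlgHom k (Rel5 k) (g5 k x)

/-- `u = sef + efs + fse`. -/
def uElt : Pi5 k := G5 k .s * G5 k .e * G5 k .f + G5 k .e * G5 k .f * G5 k .s +
  G5 k .f * G5 k .s * G5 k .e

/-- `v = tef + eft + fte`. -/
def vElt : Pi5 k := G5 k .t * G5 k .e * G5 k .f + G5 k .e * G5 k .f * G5 k .t +
  G5 k .f * G5 k .t * G5 k .e

section Aux
open Gen5

lemma grel5 {x y : FreeAlgebra k Gen5} (h : Rel5 k x y) :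
    RingQuot.mkAlgHom k (Rel5 k) x = RingQuot.mkAlgHom k (Rel5 k) y :=
  RingQuot.mkAlgHom_rel k h

lemma R_ss : G5 k s * G5 k s = 0 := by
  have h := grel5 k (Rel5.ss (k := k))
  simp only [map_mul, map_zero] at h; exact h
lemma R_tt : G5 k t * G5 k t = 0 := by
  have h := grel5 k (Rel5.tt (k := k))
  simp only [map_mul, map_zero] at h; exact h
lemma R_ts : G5 k t * G5 k s = G5 k s * G5 k t := by
  have h := (grel5 k (Rel5.st (k := k))).symm
  simp only [map_mul, map_zero] at h; exact h
lemma R_aa : G5 k a * G5 k a = G5 k a := by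
  have h := grel5 k (Rel5.aa (k := k))
  simp only [map_mul, map_zero] at h; exact h
lemma R_as : G5 k a * G5 k s = 0 := by
  have h := grel5 k (Rel5.as (k := k))
  simp only [map_mul, map_zero] at h; exact h
lemma R_sa : G5 k s * G5 k a = 0 := by
  have h := grel5 k (Rel5.sa (k := k))
  simp only [map_mul, map_zero] at h; exact h
lemma R_at : G5 k a * G5 k t = 0 := by
  have h := grel5 k (Rel5.at (k := k))
  simp only [map_mul, map_zero] at h; exact h
lemma R_ta : G5 k t * G5 k a = 0 := by
  have h := grel5 k (Rel5.ta (k := k))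
  simp only [map_mul, map_zero] at h; exact h
lemma R_ea : G5 k e * G5 k a = G5 k e := by
  have h := grel5 k (Rel5.ea (k := k))
  simp only [map_mul, map_zero] at h; exact h
lemma R_af : G5 k a * G5 k f = G5 k f := by
  have h := grel5 k (Rel5.af (k := k))
  simp only [map_mul, map_zero] at h; exact h
lemma R_ae : G5 k a * G5 k e = 0 := by
  have h := grel5 k (Rel5.ae (k := k))
  simp only [map_mul, map_zero] at h; exact h
lemma R_fa : G5 k f * G5 k a = 0 := by
  have h := grel5 k (Rel5.fa (k := k))
  simp only [map_mul, map_zero] at h; exact h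
lemma R_es : G5 k e * G5 k s = 0 := by
  have h := grel5 k (Rel5.es (k := k))
  simp only [map_mul, map_zero] at h; exact h
lemma R_et : G5 k e * G5 k t = 0 := by
  have h := grel5 k (Rel5.et (k := k))
  simp only [map_mul, map_zero] at h; exact h
lemma R_sf : G5 k s * G5 k f = 0 := by
  have h := grel5 k (Rel5.sf (k := k))
  simp only [map_mul, map_zero] at h; exact h
lemma R_tf : G5 k t * G5 k f = 0 := by
  have h := grel5 k (Rel5.tf (k := k))
  simp only [map_mul, map_zero] at h; exact h
lemma R_fe : G5 k f * G5 k e = 0 := by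
  have h := grel5 k (Rel5.fe (k := k))
  simp only [map_mul, map_zero] at h; exact h
lemma R_ee : G5 k e * G5 k e = 0 := by
  nth_rewrite 1 [← R_ea k]; rw [mul_assoc, R_ae, mul_zero]
lemma R_ff : G5 k f * G5 k f = 0 := by
  nth_rewrite 2 [← R_af k]; rw [← mul_assoc, R_fa, zero_mul]
lemma R_pre : G5 k e * (G5 k f * (G5 k s * G5 k t)) + G5 k s * (G5 k e * (G5 k f * G5 k t)) +
    G5 k t * (G5 k e * (G5 k f * G5 k s)) + G5 k s * (G5 k t * (G5 k e * G5 k f)) = 0 := by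
  have := grel5 k (Rel5.pre (k := k))
  simp only [map_mul, map_add, map_zero, mul_assoc] at this; exact this

-- parametric (right-associated) forms
lemma P_ss (z : Pi5 k) : G5 k s * (G5 k s * z) = 0 := by rw [← mul_assoc, R_ss, zero_mul]
lemma P_tt (z : Pi5 k) : G5 k t * (G5 k t * z) = 0 := by rw [← mul_assoc, R_tt, zero_mul]
lemma P_ts (z : Pi5 k) : G5 k t * (G5 k s * z) = G5 k s * (G5 k t * z) := by
  rw [← mul_assoc, R_ts, mul_assoc]
lemma P_aa (z : Pi5 k) : G5 k a * (G5 k a * z) = G5 k a * z := by rw [← mul_assoc, R_aa]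
lemma P_as (z : Pi5 k) : G5 k a * (G5 k s * z) = 0 := by rw [← mul_assoc, R_as, zero_mul]
lemma P_sa (z : Pi5 k) : G5 k s * (G5 k a * z) = 0 := by rw [← mul_assoc, R_sa, zero_mul]
lemma P_at (z : Pi5 k) : G5 k a * (G5 k t * z) = 0 := by rw [← mul_assoc, R_at, zero_mul]
lemma P_ta (z : Pi5 k) : G5 k t * (G5 k a * z) = 0 := by rw [← mul_assoc, R_ta, zero_mul]
lemma P_ea (z : Pi5 k) : G5 k e * (G5 k a * z) = G5 k e * z := by rw [← mul_assoc, R_ea]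
lemma P_af (z : Pi5 k) : G5 k a * (G5 k f * z) = G5 k f * z := by rw [← mul_assoc, R_af]
lemma P_ae (z : Pi5 k) : G5 k a * (G5 k e * z) = 0 := by rw [← mul_assoc, R_ae, zero_mul]
lemma P_fa (z : Pi5 k) : G5 k f * (G5 k a * z) = 0 := by rw [← mul_assoc, R_fa, zero_mul]
lemma P_es (z : Pi5 k) : G5 k e * (G5 k s * z) = 0 := by rw [← mul_assoc, R_es, zero_mul]
lemma P_et (z : Pi5 k) : G5 k e * (G5 k t * z) = 0 := by rw [← mul_assoc, R_et, zero_mul]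
lemma P_sf (z : Pi5 k) : G5 k s * (G5 k f * z) = 0 := by rw [← mul_assoc, R_sf, zero_mul]
lemma P_tf (z : Pi5 k) : G5 k t * (G5 k f * z) = 0 := by rw [← mul_assoc, R_tf, zero_mul]
lemma P_fe (z : Pi5 k) : G5 k f * (G5 k e * z) = 0 := by rw [← mul_assoc, R_fe, zero_mul]
lemma P_ee (z : Pi5 k) : G5 k e * (G5 k e * z) = 0 := by rw [← mul_assoc, R_ee, zero_mul]
lemma P_ff (z : Pi5 k) : G5 k f * (G5 k f * z) = 0 := by rw [← mul_assoc, R_ff, zero_mul]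

end Aux

section Auto
open Gen5

/-- Values of `σ` on generators: fix `a,s,e,f`, send `t ↦ -t`. -/
def sigVal : Gen5 → Pi5 k
  | t => -(G5 k t)
  | x => G5 k x

/-- Values of `ρ` on generators: swap `s ↔ t`, fix `a,e,f`. -/
def rhoVal : Gen5 → Pi5 k
  | s => G5 k t
  | t => G5 k s
  | x => G5 k x

def sigF : FreeAlgebra k Gen5 →ₐ[k] Pi5 k := FreeAlgebra.lift k (sigVal k)
def rhoF : FreeAlgebra k Gen5 →ₐ[k] Pi5 k := FreeAlgebra.lift k (rhoVal k)

lemma sigF_g5 (x : Gen5) : sigF k (g5 k x) = sigVal k x := by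
  simp [sigF, g5, FreeAlgebra.lift_ι_apply]
lemma rhoF_g5 (x : Gen5) : rhoF k (g5 k x) = rhoVal k x := by
  simp [rhoF, g5, FreeAlgebra.lift_ι_apply]

lemma sigF_rel : ∀ ⦃x y⦄, Rel5 k x y → sigF k x = sigF k y := by
  intro x y h
  cases h <;>
    simp only [map_mul, map_add, map_zero, sigF_g5, sigVal, mul_neg, neg_mul, neg_neg,
      neg_add_rev, neg_zero, R_ss, R_tt, R_ts, R_aa, R_as, R_sa, R_at, R_ta, R_ea, R_af,
      R_ae, R_fa, R_es, R_et, R_sf, R_tf, R_fe]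
  case pre =>
    have h := R_pre k
    simp only [mul_assoc] at h ⊢
    rw [← neg_eq_zero]
    rw [← h]
    abel

lemma rhoF_rel : ∀ ⦃x y⦄, Rel5 k x y → rhoF k x = rhoF k y := by
  intro x y h
  cases h <;>
    simp only [map_mul, map_add, map_zero, rhoF_g5, rhoVal, R_ss, R_tt, R_ts, R_aa, R_as,
      R_sa, R_at, R_ta, R_ea, R_af, R_ae, R_fa, R_es, R_et, R_sf, R_tf, R_fe]
  case pre =>
    have h := R_pre k
    simp only [mul_assoc, P_ts, R_ts] at h ⊢
    rw [← h]
    abel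

def sigHom : Pi5 k →ₐ[k] Pi5 k := RingQuot.liftAlgHom k ⟨sigF k, sigF_rel k⟩
def rhoHom : Pi5 k →ₐ[k] Pi5 k := RingQuot.liftAlgHom k ⟨rhoF k, rhoF_rel k⟩

lemma sigHom_G5 (x : Gen5) : sigHom k (G5 k x) = sigVal k x := by
  unfold sigHom G5
  exact (RingQuot.liftAlgHom_mkAlgHom_apply k (sigF k) (sigF_rel k) (g5 k x)).trans
    (sigF_g5 k x)
lemma rhoHom_G5 (x : Gen5) : rhoHom k (G5 k x) = rhoVal k x := by
  unfold rhoHom G5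
  exact (RingQuot.liftAlgHom_mkAlgHom_apply k (rhoF k) (rhoF_rel k) (g5 k x)).trans
    (rhoF_g5 k x)

lemma sigHom_inv : (sigHom k).comp (sigHom k) = AlgHom.id k (Pi5 k) := by
  apply RingQuot.ringQuot_ext'
  apply FreeAlgebra.hom_ext
  funext x
  show sigHom k (sigHom k (G5 k x)) = G5 k x
  cases x <;> simp [sigHom_G5, sigVal, map_neg]

lemma rhoHom_inv : (rhoHom k).comp (rhoHom k) = AlgHom.id k (Pi5 k) := by
  apply RingQuot.ringQuot_ext'
  apply FreeAlgebra.hom_ext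
  funext x
  show rhoHom k (rhoHom k (G5 k x)) = G5 k x
  cases x <;> simp [rhoHom_G5, rhoVal]

def sigEquiv : Pi5 k ≃ₐ[k] Pi5 k :=
  AlgEquiv.ofAlgHom (sigHom k) (sigHom k) (sigHom_inv k) (sigHom_inv k)
def rhoEquiv : Pi5 k ≃ₐ[k] Pi5 k :=
  AlgEquiv.ofAlgHom (rhoHom k) (rhoHom k) (rhoHom_inv k) (rhoHom_inv k)

end Auto

section Norm
open Gen5

lemma uElt_gen_norm (x : Gen5) : uElt k * G5 k x = sigVal k x * uElt k := by
  cases x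
  case a =>
    simp [uElt, sigVal, mul_add, add_mul, mul_assoc, R_fa, P_fa, R_sa, P_sa, R_ea, P_ea,
      R_as, P_as, R_ae, P_ae, R_af, P_af]
  case s =>
    simp [uElt, sigVal, mul_add, add_mul, mul_assoc, R_ss, P_ss, R_es, P_es, R_sf, P_sf]
  case t =>
    show uElt k * G5 k t = -(G5 k t) * uElt k
    rw [neg_mul, eq_neg_iff_add_eq_zero]
    have h := R_pre k
    simp only [uElt, mul_add, add_mul, mul_assoc, R_et, P_et, R_tf, P_tf, P_ts, R_ts,
      mul_zero, zero_mul, add_zero, zero_add]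
    rw [← h]
    abel
  case e =>
    simp [uElt, sigVal, mul_add, add_mul, mul_assoc, R_fe, P_fe, R_ee, P_ee, R_es, P_es]
  case f =>
    simp [uElt, sigVal, mul_add, add_mul, mul_assoc, R_ff, P_ff, R_sf, P_sf, R_fe, P_fe]

lemma uElt_norm (x : Pi5 k) : uElt k * x = sigHom k x * uElt k := by
  obtain ⟨y, rfl⟩ := RingQuot.mkAlgHom_surjective k (Rel5 k) x
  induction y using FreeAlgebra.induction with
  | grade0 r =>
    rw [AlgHom.commutes (RingQuot.mkAlgHom k (Rel5 k)) r]
    show uElt k * algebraMap k (Pi5 k) r = sigHom k (algebraMap k (Pi5 k) r) * uElt k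
    rw [AlgHom.commutes (sigHom k) r]
    exact (Algebra.commutes r (uElt k)).symm
  | grade1 x =>
    show uElt k * G5 k x = sigHom k (G5 k x) * uElt k
    rw [sigHom_G5]
    exact uElt_gen_norm k x
  | mul p q hp hq =>
    rw [map_mul]
    exact (mul_assoc _ _ _).symm.trans ((congrArg (fun x : Pi5 k => x * @id (Pi5 k) (RingQuot.mkAlgHom k (Rel5 k) q)) hp).trans ((mul_assoc _ _ _).trans
      ((congrArg (fun x : Pi5 k => sigHom k (@id (Pi5 k) (RingQuot.mkAlgHom k (Rel5 k) p)) * x) hq).trans ((mul_assoc _ _ _).symm.trans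
      (congrArg (· * uElt k) (map_mul (sigHom k) _ _).symm)))))
  | add p q hp hq =>
    rw [map_add]
    exact (mul_add _ _ _).trans ((congrArg₂ (· + ·) hp hq).trans ((add_mul _ _ _).symm.trans
      (congrArg (· * uElt k) (map_add (sigHom k) _ _).symm)))

lemma sigHom_sq (x : Pi5 k) : sigHom k (sigHom k x) = x :=
  AlgHom.congr_fun (sigHom_inv k) x

lemma rhoHom_sq (x : Pi5 k) : rhoHom k (rhoHom k x) = x :=
  AlgHom.congr_fun (rhoHom_inv k) x

lemma u_sq_central : uElt k ^ 2 ∈ Subalgebra.center k (Pi5 k) := by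
  rw [Subalgebra.mem_center_iff]
  intro b
  have h1 : uElt k * b = sigHom k b * uElt k := uElt_norm k b
  have h2 : uElt k * sigHom k b = b * uElt k := by
    rw [uElt_norm k (sigHom k b), sigHom_sq]
  rw [pow_two]
  calc b * (uElt k * uElt k) = (b * uElt k) * uElt k := (mul_assoc _ _ _).symm
    _ = (uElt k * sigHom k b) * uElt k := by rw [h2]
    _ = uElt k * (sigHom k b * uElt k) := mul_assoc _ _ _
    _ = uElt k * (uElt k * b) := by rw [← h1]
    _ = uElt k * uElt k * b := (mul_assoc _ _ _).symm

lemma rho_u : rhoHom k (uElt k) = vElt k := by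
  simp [uElt, vElt, map_add, map_mul, rhoHom_G5, rhoVal]

lemma v_sq_central : vElt k ^ 2 ∈ Subalgebra.center k (Pi5 k) := by
  rw [Subalgebra.mem_center_iff]
  intro b
  have hc := (Subalgebra.mem_center_iff).mp (u_sq_central k) (rhoHom k b)
  calc b * vElt k ^ 2 = rhoHom k (rhoHom k b * uElt k ^ 2) := by
        rw [map_mul, rhoHom_sq, map_pow, rho_u]
    _ = rhoHom k (uElt k ^ 2 * rhoHom k b) := by rw [hc]
    _ = vElt k ^ 2 * b := by rw [map_mul, rhoHom_sq, map_pow, rho_u]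

lemma word_mem (l : List Gen5) (d : ℕ) (h : (l.map deg5).sum = d) :
    (l.map fun x => RingQuot.mkAlgHom k (Rel5 k) (g5 k x)).prod ∈ Pi5Comp k d :=
  Submodule.subset_span ⟨l, h, rfl⟩

lemma comp2_mul {x y : Pi5 k} (hx : x ∈ Pi5Comp k 2) (hy : y ∈ Pi5Comp k 2) :
    x * y ∈ Pi5Comp k 4 := by
  induction hx, hy using Submodule.span_induction₂ with
  | mem_mem x y hx hy =>
    obtain ⟨l1, h1, rfl⟩ := hx
    obtain ⟨l2, h2, rfl⟩ := hy
    have := word_mem k (l1 ++ l2) 4 (by simp [h1, h2])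
    simp only [List.map_append, List.prod_append] at this; exact this
  | zero_left y hy => simp
  | zero_right x hx => simp
  | add_left x y z hx hy hz h1 h2 => simpa [add_mul] using add_mem h1 h2
  | add_right x y z hx hy hz h1 h2 => simpa [mul_add] using add_mem h1 h2
  | smul_left r x y hx hy h => simpa [smul_mul_assoc] using Submodule.smul_mem _ r h
  | smul_right r x y hx hy h => simpa [mul_smul_comm] using Submodule.smul_mem _ r h

lemma u_mem2 : uElt k ∈ Pi5Comp k 2 := by
  have h1 : G5 k s * G5 k e * G5 k f ∈ Pi5Comp k 2 := by
    have := word_mem k [s, e, f] 2 rfl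
    rw [mul_assoc]; simp only [G5]
    simp only [List.map_cons, List.map_nil, List.prod_cons, List.prod_nil, mul_one] at this
    exact this
  have h2 : G5 k e * G5 k f * G5 k s ∈ Pi5Comp k 2 := by
    have := word_mem k [e, f, s] 2 rfl
    rw [mul_assoc]; simp only [G5]
    simp only [List.map_cons, List.map_nil, List.prod_cons, List.prod_nil, mul_one] at this
    exact this
  have h3 : G5 k f * G5 k s * G5 k e ∈ Pi5Comp k 2 := by
    have := word_mem k [f, s, e] 2 rfl
    rw [mul_assoc]; simp only [G5]
    simp only [List.map_cons, List.map_nil, List.prod_cons, List.prod_nil, mul_one] at this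
    exact this
  exact add_mem (add_mem h1 h2) h3

lemma v_mem2 : vElt k ∈ Pi5Comp k 2 := by
  have h1 : G5 k t * G5 k e * G5 k f ∈ Pi5Comp k 2 := by
    have := word_mem k [t, e, f] 2 rfl
    rw [mul_assoc]; simp only [G5]
    simp only [List.map_cons, List.map_nil, List.prod_cons, List.prod_nil, mul_one] at this
    exact this
  have h2 : G5 k e * G5 k f * G5 k t ∈ Pi5Comp k 2 := by
    have := word_mem k [e, f, t] 2 rfl
    rw [mul_assoc]; simp only [G5]
    simp only [List.map_cons, List.map_nil, List.prod_cons, List.prod_nil, mul_one] at this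
    exact this
  have h3 : G5 k f * G5 k t * G5 k e ∈ Pi5Comp k 2 := by
    have := word_mem k [f, t, e] 2 rfl
    rw [mul_assoc]; simp only [G5]
    simp only [List.map_cons, List.map_nil, List.prod_cons, List.prod_nil, mul_one] at this
    exact this
  exact add_mem (add_mem h1 h2) h3

end Norm

/-- In `Π = Π_k(k[s,t]/(s²,t²))`, there is a `k`-algebra automorphism `σ` fixing
`a, s, e, f` and sending `t ↦ −t`; the element `u = sef + efs + fse` is normalizing with
respect to `σ`, i.e. `u x = σ(x) u` for all `x`; and consequently `A := u²` and `B := v²`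
(with `v = tef + eft + fte`) are central elements of `Π` of degree 4. -/
theorem uElt_normalizing :
    ∃ σ : Pi5 k ≃ₐ[k] Pi5 k,
      σ (G5 k .a) = G5 k .a ∧ σ (G5 k .s) = G5 k .s ∧ σ (G5 k .t) = -G5 k .t ∧
      σ (G5 k .e) = G5 k .e ∧ σ (G5 k .f) = G5 k .f ∧
      (∀ x : Pi5 k, uElt k * x = σ x * uElt k) ∧
      uElt k ^ 2 ∈ Subalgebra.center k (Pi5 k) ∧ uElt k ^ 2 ∈ Pi5Comp k 4 ∧
      vElt k ^ 2 ∈ Subalgebra.center k (Pi5 k) ∧ vElt k ^ 2 ∈ Pi5Comp k 4 := by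
  refine ⟨sigEquiv k, ?_, ?_, ?_, ?_, ?_, ?_, ?_, ?_, ?_, ?_⟩
  · exact sigHom_G5 k .a
  · exact sigHom_G5 k .s
  · exact sigHom_G5 k .t
  · exact sigHom_G5 k .e
  · exact sigHom_G5 k .f
  · exact uElt_norm k
  · exact u_sq_central k
  · rw [pow_two]; exact comp2_mul k (u_mem2 k) (u_mem2 k)
  · exact v_sq_central k
  · rw [pow_two]; exact comp2_mul k (v_mem2 k) (v_mem2 k)

end
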